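/- Let p, q be coprime polynomials in two variables over ℝ with max(deg p, deg q) = d'. Then there exists a line L ⊂ ℝ² (in fact a Zariski open set of lines) such that the restrictions of p and q to L are coprime polynomials in one variable and at least one of them has degree d'. -/

import Mathlib

open Polynomial


lemma sum_fin2 (m : Fin 2 →₀ ℕ) : (m.sum fun _ e => e) = m 0 + m 1 := by
  rw [Finsupp.sum_fintype _ _ (fun _ => rfl)]
  exact Fin.sum_univ_two _

lemma deg_aux (p : MvPolynomial (Fin 2) ℝ) (hp : p ≠ 0) :
    ∃ Φ : Polynomial ℝ, Φ ≠ 0 ∧ ∀ (b c : ℝ), c ≠ 0 → Φ.eval c ≠ 0 →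
      (MvPolynomial.aeval ![Polynomial.X, Polynomial.C b + Polynomial.C c * Polynomial.X] p).natDegree
        = p.totalDegree := by
  classical
  set d := p.totalDegree with hd
  set Φ : Polynomial ℝ :=
    ∑ m ∈ p.support.filter (fun m => m 0 + m 1 = d),
      Polynomial.C (MvPolynomial.coeff m p) * Polynomial.X ^ (m 1) with hΦ
  -- a top-degree monomial
  obtain ⟨m₀, hm₀s, hm₀⟩ : ∃ m₀ ∈ p.support, d = m₀.sum fun _ e => e := by
    apply Finset.exists_mem_eq_sup _ (MvPolynomial.support_nonempty.2 hp)
  have hm₀d : m₀ 0 + m₀ 1 = d := by rw [hm₀, sum_fin2]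
  have hΦne : Φ ≠ 0 := by
    have hcoeff : Φ.coeff (m₀ 1) = MvPolynomial.coeff m₀ p := by
      rw [hΦ, Polynomial.finset_sum_coeff]
      rw [Finset.sum_eq_single m₀]
      · simp
      · intro m hm hne
        simp only [Polynomial.coeff_C_mul, Polynomial.coeff_X_pow]
        rcases Finset.mem_filter.1 hm with ⟨-, hmd⟩
        have : ¬ (m₀ 1 = m 1) := by
          intro h
          apply hne
          ext i
          fin_cases i
          · show m 0 = m₀ 0; omega
          · show m 1 = m₀ 1; omega
        simp [this]
      · intro h
        exact absurd (Finset.mem_filter.2 ⟨hm₀s, hm₀d⟩) h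
    intro h
    rw [h, Polynomial.coeff_zero] at hcoeff
    exact (MvPolynomial.mem_support_iff.1 hm₀s) hcoeff.symm
  refine ⟨Φ, hΦne, fun b c hc hΦc => ?_⟩
  set g : Fin 2 → Polynomial ℝ := ![Polynomial.X, Polynomial.C b + Polynomial.C c * Polynomial.X]
    with hg
  have hg0 : g 0 = Polynomial.X := rfl
  have hg1 : g 1 = Polynomial.C b + Polynomial.C c * Polynomial.X := rfl
  have hg1deg : (g 1).natDegree = 1 := by
    rw [hg1, add_comm]
    exact Polynomial.natDegree_linear hc
  have hg1lead : (g 1).leadingCoeff = c := by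
    rw [Polynomial.leadingCoeff, hg1deg, hg1]
    simp
  have heval : MvPolynomial.aeval g p =
      ∑ m ∈ p.support, Polynomial.C (MvPolynomial.coeff m p) * (g 0 ^ m 0 * g 1 ^ m 1) := by
    rw [MvPolynomial.aeval_def, MvPolynomial.eval₂_eq']
    congr 1
    funext m
    rw [Polynomial.algebraMap_eq, Fin.prod_univ_two]
  -- degree bound
  have hdegle : (MvPolynomial.aeval g p).natDegree ≤ d := by
    rw [heval]
    apply Polynomial.natDegree_sum_le_of_forall_le
    intro m hm
    refine le_trans (Polynomial.natDegree_mul_le) ?_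
    rw [Polynomial.natDegree_C, zero_add]
    refine le_trans (Polynomial.natDegree_mul_le) ?_
    have h0 : (g 0 ^ m 0).natDegree ≤ m 0 := by
      refine le_trans (Polynomial.natDegree_pow_le) ?_
      simp [hg0]
    have h1 : (g 1 ^ m 1).natDegree ≤ m 1 := by
      refine le_trans (Polynomial.natDegree_pow_le) ?_
      rw [hg1deg]; omega
    have : m 0 + m 1 ≤ d := by
      rw [← sum_fin2 m]; exact MvPolynomial.le_totalDegree hm
    omega
  -- top coefficient
  have hcoeffd : (MvPolynomial.aeval g p).coeff d = Φ.eval c := by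
    rw [heval, Polynomial.finset_sum_coeff, hΦ, Polynomial.eval_finset_sum,
      Finset.sum_filter]
    rw [← Finset.sum_filter, Finset.sum_filter]
    apply Finset.sum_congr rfl
    intro m hm
    have hmd : m 0 + m 1 ≤ d := by
      rw [← sum_fin2 m]; exact MvPolynomial.le_totalDegree hm
    rw [Polynomial.coeff_C_mul, hg0, mul_comm (Polynomial.X ^ m 0),
      Polynomial.coeff_mul_X_pow']
    by_cases hcase : m 0 + m 1 = d
    · have hle : m 0 ≤ d := by omega
      have : d - m 0 = m 1 := by omega
      rw [if_pos hle, this]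
      have : (g 1 ^ m 1).coeff (m 1) = c ^ m 1 := by
        have := Polynomial.coeff_pow_mul_natDegree (g 1) (m 1)
        rwa [hg1deg, mul_one, hg1lead] at this
      rw [this, if_pos hcase]
      simp
    · rw [if_neg hcase]
      by_cases hle : m 0 ≤ d
      · rw [if_pos hle]
        have : (g 1 ^ m 1).natDegree < d - m 0 := by
          have : (g 1 ^ m 1).natDegree ≤ m 1 := by
            refine le_trans (Polynomial.natDegree_pow_le) ?_; rw [hg1deg]; omega
          omega
        rw [Polynomial.coeff_eq_zero_of_natDegree_lt this, mul_zero]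
      · rw [if_neg hle]
        ring
  have : d ≤ (MvPolynomial.aeval g p).natDegree := by
    apply Polynomial.le_natDegree_of_ne_zero
    rw [hcoeffd]; exact hΦc
  omega


noncomputable def e1 : MvPolynomial (Fin 1) ℝ ≃ₐ[ℝ] Polynomial ℝ :=
  (MvPolynomial.renameEquiv ℝ (Equiv.equivPUnit.{1,1} (Fin 1))).trans (MvPolynomial.pUnitAlgEquiv.{0,0} ℝ)

noncomputable def E2 : MvPolynomial (Fin 2) ℝ ≃ₐ[ℝ] Polynomial (Polynomial ℝ) :=
  (MvPolynomial.finSuccEquiv ℝ 1).trans (Polynomial.mapAlgEquiv e1)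

lemma E2_X1 : E2 (MvPolynomial.X 1) = Polynomial.C Polynomial.X := by
  rw [show (1 : Fin 2) = Fin.succ 0 from rfl]
  show (Polynomial.mapAlgEquiv e1) ((MvPolynomial.finSuccEquiv ℝ 1) (MvPolynomial.X (Fin.succ 0)))
    = Polynomial.C Polynomial.X
  rw [MvPolynomial.finSuccEquiv_X_succ]
  show Polynomial.map e1.toRingHom _ = _
  rw [Polynomial.map_C]
  congr 1
  show e1 (MvPolynomial.X 0) = Polynomial.X
  simp [e1]

lemma E2_symm_C (r : Polynomial ℝ) :
    E2.symm (Polynomial.C r) = Polynomial.aeval (MvPolynomial.X 1) r := by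
  have h : (E2.symm.toAlgHom.comp (IsScalarTower.toAlgHom ℝ (Polynomial ℝ) (Polynomial (Polynomial ℝ))))
      = Polynomial.aeval (MvPolynomial.X (1 : Fin 2)) := by
    apply Polynomial.algHom_ext
    simp only [AlgHom.coe_comp, AlgHom.coe_coe, Function.comp_apply,
      IsScalarTower.coe_toAlgHom', Polynomial.aeval_X]
    rw [Polynomial.algebraMap_eq]
    apply E2.injective
    simp [E2_X1]
  have := congrArg (fun f => f r) (congrArg DFunLike.coe h)
  simpa [Polynomial.algebraMap_eq] using this

lemma bezout_aux (p q : MvPolynomial (Fin 2) ℝ) (hp : p ≠ 0) (hq : q ≠ 0)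
    (hcop : ∀ D : MvPolynomial (Fin 2) ℝ, D ∣ p → D ∣ q → IsUnit D) :
    ∃ (A B : MvPolynomial (Fin 2) ℝ) (r : Polynomial ℝ), r ≠ 0 ∧
      A * p + B * q = Polynomial.aeval (MvPolynomial.X 1) r := by
  classical
  set K := FractionRing (Polynomial ℝ)
  set φ : Polynomial ℝ →+* K := algebraMap (Polynomial ℝ) K with hφ
  have hφinj : Function.Injective φ := IsFractionRing.injective _ _
  have hmapinj : Function.Injective (Polynomial.map φ) :=
    Polynomial.map_injective φ hφinj
  set P := E2 p with hP
  set Q := E2 q with hQ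
  have hPne : P ≠ 0 := fun h => hp (E2.injective (by rw [← hP, h, map_zero]))
  have hQne : Q ≠ 0 := fun h => hq (E2.injective (by rw [← hQ, h, map_zero]))
  have hPm : P.map φ ≠ 0 := fun h => hPne (hmapinj (by simpa using h))
  have hQm : Q.map φ ≠ 0 := fun h => hQne (hmapinj (by simpa using h))
  have hcop' : ∀ D : Polynomial (Polynomial ℝ), D ∣ P → D ∣ Q → IsUnit D := by
    intro D h1 h2
    have d1 : E2.symm D ∣ p := by
      obtain ⟨u, hu⟩ := h1
      exact ⟨E2.symm u, by rw [← map_mul, ← hu, hP, AlgEquiv.symm_apply_apply]⟩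
    have d2 : E2.symm D ∣ q := by
      obtain ⟨u, hu⟩ := h2
      exact ⟨E2.symm u, by rw [← map_mul, ← hu, hQ, AlgEquiv.symm_apply_apply]⟩
    have := (hcop _ d1 d2).map E2
    simpa using this
  -- unit C's in K[X]
  have hCunit : ∀ x : Polynomial ℝ, x ≠ 0 → IsUnit (Polynomial.C (φ x)) := by
    intro x hx
    exact Polynomial.isUnit_C.2 ((map_ne_zero_iff φ hφinj).2 hx).isUnit
  have hrel : IsRelPrime (P.map φ) (Q.map φ) := by
    intro D h1 h2
    have hD0 : D ≠ 0 := by rintro rfl; exact hPm (zero_dvd_iff.1 h1)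
    obtain ⟨⟨c, hc0⟩, hc⟩ := IsLocalization.integerNormalization_map_to_map
      (nonZeroDivisors (Polynomial ℝ)) D
    rw [Algebra.smul_def] at hc
    have hcne : c ≠ 0 := nonZeroDivisors.ne_zero hc0
    set N := IsLocalization.integerNormalization (nonZeroDivisors (Polynomial ℝ)) D with hN
    have hcC : algebraMap (Polynomial ℝ) (Polynomial K) c = Polynomial.C (φ c) := rfl
    rw [hcC] at hc
    have hNne : N ≠ 0 := by
      intro h
      rw [h, Polynomial.map_zero] at hc
      exact hD0 (by
        have := hc.symm
        rcases mul_eq_zero.1 this with h' | h'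
        · exact absurd h' (hCunit c hcne).ne_zero
        · exact h')
    have hNcont : N.content ≠ 0 := fun h => hNne (Polynomial.content_eq_zero_iff.1 h)
    set D₀ := N.primPart with hD₀
    have hkey : ∀ R : Polynomial (Polynomial ℝ), R ≠ 0 → D ∣ R.map φ → D₀ ∣ R := by
      intro R hR hdvd
      have heq : Polynomial.C (φ N.content) * (D₀.map φ) = Polynomial.C (φ c) * D := by
        rw [← Polynomial.map_C, ← Polynomial.map_mul, ← Polynomial.eq_C_content_mul_primPart N, hc]
      have hD₀D : D₀.map φ ∣ D := by
        have : D₀.map φ ∣ Polynomial.C (φ c) * D :=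
          Dvd.intro_left _ heq
        exact (IsUnit.dvd_mul_left (hCunit c hcne)).1 this
      have hDR : D₀.map φ ∣ R.map φ := hD₀D.trans hdvd
      have hRcont : R.content ≠ 0 := fun h => hR (Polynomial.content_eq_zero_iff.1 h)
      have hDRp : D₀.map φ ∣ R.primPart.map φ := by
        have h1 : R.map φ = Polynomial.C (φ R.content) * (R.primPart.map φ) := by
          rw [← Polynomial.map_C, ← Polynomial.map_mul, ← Polynomial.eq_C_content_mul_primPart]
        rw [h1] at hDR
        exact (IsUnit.dvd_mul_left (hCunit _ hRcont)).1 hDR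
      exact (N.isPrimitive_primPart.dvd_of_fraction_map_dvd_fraction_map
        hDRp).trans R.primPart_dvd
    have hunit₀ : IsUnit D₀ := hcop' D₀ (hkey P hPne h1) (hkey Q hQne h2)
    have : IsUnit (Polynomial.C (φ c) * D) := by
      rw [← (by
        rw [← Polynomial.map_C, ← Polynomial.map_mul, ← Polynomial.eq_C_content_mul_primPart N, hc]
        : Polynomial.C (φ N.content) * (D₀.map φ) = Polynomial.C (φ c) * D)]
      exact (hCunit _ hNcont).mul (hunit₀.map (Polynomial.mapRingHom φ))
    exact isUnit_of_mul_isUnit_right this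
  have hKcop : IsCoprime (P.map φ) (Q.map φ) := hrel.isCoprime
  obtain ⟨A', B', hAB⟩ := hKcop
  obtain ⟨⟨cA, hcA0⟩, hA⟩ := IsLocalization.integerNormalization_map_to_map
    (nonZeroDivisors (Polynomial ℝ)) A'
  obtain ⟨⟨cB, hcB0⟩, hB⟩ := IsLocalization.integerNormalization_map_to_map
    (nonZeroDivisors (Polynomial ℝ)) B'
  rw [Algebra.smul_def] at hA hB
  have hcA : cA ≠ 0 := nonZeroDivisors.ne_zero hcA0
  have hcB : cB ≠ 0 := nonZeroDivisors.ne_zero hcB0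
  set NA := IsLocalization.integerNormalization (nonZeroDivisors (Polynomial ℝ)) A' with hNA
  set NB := IsLocalization.integerNormalization (nonZeroDivisors (Polynomial ℝ)) B' with hNB
  set G : Polynomial (Polynomial ℝ) :=
    NA * Polynomial.C cB * P + NB * Polynomial.C cA * Q with hG
  have hGeq : G = Polynomial.C (cA * cB) := by
    apply hmapinj
    have hcCA : algebraMap (Polynomial ℝ) (Polynomial K) cA = Polynomial.C (φ cA) := rfl
    have hcCB : algebraMap (Polynomial ℝ) (Polynomial K) cB = Polynomial.C (φ cB) := rfl
    rw [hcCA] at hA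
    rw [hcCB] at hB
    rw [hG]
    push_cast [Polynomial.map_add, Polynomial.map_mul, Polynomial.map_C]
    rw [hA, hB]
    have : Polynomial.C (φ (cA * cB)) = Polynomial.C (φ cA) * Polynomial.C (φ cB) := by
      rw [map_mul, Polynomial.C_mul]
    rw [this]
    linear_combination (Polynomial.C (φ cA) * Polynomial.C (φ cB)) * hAB
  refine ⟨E2.symm (NA * Polynomial.C cB), E2.symm (NB * Polynomial.C cA), cA * cB,
    mul_ne_zero hcA hcB, ?_⟩
  rw [← E2_symm_C]
  have : E2.symm G = E2.symm (NA * Polynomial.C cB) * p + E2.symm (NB * Polynomial.C cA) * q := by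
    rw [hG, map_add, map_mul, map_mul, hP, hQ]
    simp
  rw [← this, hGeq]


lemma aeval_aeval (f : Fin 2 → Polynomial ℝ) (i : Fin 2) (r : Polynomial ℝ) :
    MvPolynomial.aeval (R := ℝ) f (Polynomial.aeval (R := ℝ) (MvPolynomial.X i) r) = Polynomial.aeval (f i) r := by
  have h : ((MvPolynomial.aeval f).comp (Polynomial.aeval (MvPolynomial.X i)) :
      Polynomial ℝ →ₐ[ℝ] Polynomial ℝ) = Polynomial.aeval (f i) := by
    apply Polynomial.algHom_ext; simp
  exact DFunLike.congr_fun h r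

lemma aeval_aeval_c (z : ℂ) (g : Polynomial ℝ) (r : Polynomial ℝ) :
    Polynomial.aeval z (Polynomial.aeval g r) = Polynomial.aeval (Polynomial.aeval z g) r := by
  have h : ((Polynomial.aeval z).comp (Polynomial.aeval g) : Polynomial ℝ →ₐ[ℝ] ℂ)
      = Polynomial.aeval (Polynomial.aeval z g) := by
    apply Polynomial.algHom_ext; simp
  exact DFunLike.congr_fun h r

lemma line_funext (b c : ℝ) :
    (fun i => Polynomial.C (![(0:ℝ),b] i) + Polynomial.C (![(1:ℝ),c] i) * Polynomial.X)
      = ![Polynomial.X, Polynomial.C b + Polynomial.C c * Polynomial.X] := by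
  funext i; fin_cases i <;> simp

lemma vne (c : ℝ) : ![(1:ℝ), c] ≠ 0 := by
  intro h
  have := congrFun h 0
  simp at this

lemma main_aux (d' : ℕ) (p q : MvPolynomial (Fin 2) ℝ)
    (hcop : ∀ D : MvPolynomial (Fin 2) ℝ, D ∣ p → D ∣ q → IsUnit D)
    (hpd : p.totalDegree = d') :
    ∃ (a v : Fin 2 → ℝ), v ≠ 0 ∧
      IsCoprime
        (MvPolynomial.aeval (fun i => Polynomial.C (a i) + Polynomial.C (v i) * Polynomial.X) p)
        (MvPolynomial.aeval (fun i => Polynomial.C (a i) + Polynomial.C (v i) * Polynomial.X) q) ∧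
      (MvPolynomial.aeval (fun i => Polynomial.C (a i) + Polynomial.C (v i) * Polynomial.X) p).natDegree
        = d' := by
  classical
  by_cases hp : p = 0
  · -- q must be a unit
    have hqu : IsUnit q := hcop q (hp ▸ dvd_zero q) dvd_rfl
    refine ⟨![0,0], ![1,0], vne 0, ?_, ?_⟩
    · rw [hp, map_zero]
      exact isCoprime_zero_left.2 (hqu.map _)
    · rw [hp, map_zero, Polynomial.natDegree_zero, ← hpd, hp, MvPolynomial.totalDegree_zero]
  by_cases hq : q = 0
  · have hpu : IsUnit p := hcop p dvd_rfl (hq ▸ dvd_zero p)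
    obtain ⟨Φ, hΦ, hΦdeg⟩ := deg_aux p hp
    obtain ⟨c, hcΦX⟩ : ∃ c, (Φ * Polynomial.X).eval c ≠ 0 := by
      by_contra h; push_neg at h
      exact mul_ne_zero hΦ Polynomial.X_ne_zero (Polynomial.zero_of_eval_zero _ h)
    have hΦc : Φ.eval c ≠ 0 := fun h => hcΦX (by simp [h])
    have hc0 : c ≠ 0 := fun h => hcΦX (by simp [h])
    refine ⟨![0,0], ![1,c], vne c, ?_, ?_⟩
    · rw [hq, map_zero]
      exact isCoprime_zero_right.2 (hpu.map _)
    · rw [show ((0:ℝ)) = (0:ℝ) from rfl, line_funext 0 c, hΦdeg 0 c hc0 hΦc, hpd]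
  -- main case
  obtain ⟨Φ, hΦ, hΦdeg⟩ := deg_aux p hp
  obtain ⟨A₁, B₁, r, hr, hL1⟩ := bezout_aux p q hp hq hcop
  set τ : MvPolynomial (Fin 2) ℝ ≃ₐ[ℝ] MvPolynomial (Fin 2) ℝ :=
    MvPolynomial.renameEquiv ℝ (Equiv.swap (0:Fin 2) 1) with hτ
  have hτp : τ p ≠ 0 := fun h => hp (τ.injective (by rw [h, map_zero]))
  have hτq : τ q ≠ 0 := fun h => hq (τ.injective (by rw [h, map_zero]))
  have hcopτ : ∀ D, D ∣ τ p → D ∣ τ q → IsUnit D := by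
    intro D h1 h2
    have d1 : τ.symm D ∣ p := by
      obtain ⟨u, hu⟩ := h1
      exact ⟨τ.symm u, by rw [← map_mul, ← hu, τ.symm_apply_apply]⟩
    have d2 : τ.symm D ∣ q := by
      obtain ⟨u, hu⟩ := h2
      exact ⟨τ.symm u, by rw [← map_mul, ← hu, τ.symm_apply_apply]⟩
    have := (hcop _ d1 d2).map τ
    simpa using this
  obtain ⟨A₂, B₂, s, hs, hL2⟩ := bezout_aux (τ p) (τ q) hτp hτq hcopτ
  have hsw : τ.symm (Polynomial.aeval (R := ℝ) (MvPolynomial.X 1) s)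
      = Polynomial.aeval (R := ℝ) (MvPolynomial.X 0) s := by
    have h : (τ.symm.toAlgHom.comp (Polynomial.aeval (R := ℝ) (MvPolynomial.X 1)) :
        Polynomial ℝ →ₐ[ℝ] MvPolynomial (Fin 2) ℝ)
        = Polynomial.aeval (R := ℝ) (MvPolynomial.X (0 : Fin 2)) := by
      apply Polynomial.algHom_ext
      simp [hτ, Equiv.swap_apply_right]
    exact DFunLike.congr_fun h s
  have hL2' : τ.symm A₂ * p + τ.symm B₂ * q = Polynomial.aeval (R := ℝ) (MvPolynomial.X 0) s := by
    have h2 := congrArg τ.symm hL2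
    rw [map_add, map_mul, map_mul, τ.symm_apply_apply, τ.symm_apply_apply, hsw] at h2
    exact h2
  -- choose slope c
  obtain ⟨c, hcΦX⟩ : ∃ c, (Φ * Polynomial.X).eval c ≠ 0 := by
    by_contra h; push_neg at h
    exact mul_ne_zero hΦ Polynomial.X_ne_zero (Polynomial.zero_of_eval_zero _ h)
  have hΦc : Φ.eval c ≠ 0 := fun h => hcΦX (by simp [h])
  have hc0 : c ≠ 0 := fun h => hcΦX (by simp [h])
  -- choose offset b
  set T : Finset ℝ := (Finset.image₂ (fun z w => w - (c:ℂ) * z)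
    (s.aroots ℂ).toFinset (r.aroots ℂ).toFinset).image Complex.re with hT
  obtain ⟨b, hb⟩ := Infinite.exists_notMem_finset T
  refine ⟨![0,b], ![1,c], vne c, ?_, ?_⟩
  · rw [line_funext b c]
    set g : Fin 2 → Polynomial ℝ :=
      ![Polynomial.X, Polynomial.C b + Polynomial.C c * Polynomial.X] with hgdef
    apply IsRelPrime.isCoprime
    intro D h1 h2
    have hdr : D ∣ Polynomial.aeval (g 1) r := by
      have h := congrArg (MvPolynomial.aeval (R := ℝ) g) hL1
      rw [map_add, map_mul, map_mul, aeval_aeval] at h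
      rw [← h]
      exact dvd_add (h1.mul_left _) (h2.mul_left _)
    have hds : D ∣ s := by
      have h := congrArg (MvPolynomial.aeval (R := ℝ) g) hL2'
      rw [map_add, map_mul, map_mul, aeval_aeval] at h
      have hg0 : g 0 = Polynomial.X := rfl
      rw [hg0, Polynomial.aeval_X_left_apply] at h
      rw [← h]
      exact dvd_add ((h1.mul_left _)) ((h2.mul_left _))
    have hco : IsCoprime s (Polynomial.aeval (g 1) r) := by
      rw [Polynomial.isCoprime_iff_aeval_ne_zero_of_isAlgClosed ℝ ℂ]
      intro z
      by_contra hz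
      push_neg at hz
      obtain ⟨hz1, hz2⟩ := hz
      have hg1 : g 1 = Polynomial.C b + Polynomial.C c * Polynomial.X := rfl
      have hz2' : Polynomial.aeval ((b:ℂ) + c * z) r = 0 := by
        rw [aeval_aeval_c, hg1] at hz2
        have : Polynomial.aeval z (Polynomial.C b + Polynomial.C c * Polynomial.X) = (b:ℂ) + c * z := by
          simp
        rwa [this] at hz2
      have hzs : z ∈ (s.aroots ℂ).toFinset := by
        rw [Multiset.mem_toFinset, Polynomial.mem_aroots]
        exact ⟨hs, hz1⟩
      have hzr : (b:ℂ) + c * z ∈ (r.aroots ℂ).toFinset := by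
        rw [Multiset.mem_toFinset, Polynomial.mem_aroots]
        exact ⟨hr, hz2'⟩
      apply hb
      rw [hT, Finset.mem_image]
      refine ⟨(b:ℂ) + c * z - c * z, Finset.mem_image₂.2 ⟨z, hzs, (b:ℂ) + c * z, hzr, rfl⟩, ?_⟩
      simp
    exact hco.isUnit_of_dvd' hds hdr
  · rw [line_funext b c, hΦdeg b c hc0 hΦc, hpd]

/-- Given coprime polynomials `p`, `q` in two variables over `ℝ` with
`max (deg p) (deg q) = d'`, there is a line `t ↦ a + t • v` in `ℝ²` such that
the restrictions of `p` and `q` to it are coprime one-variable polynomials and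
at least one of them has degree `d'`. -/
theorem stmt_9 (d' : ℕ) (p q : MvPolynomial (Fin 2) ℝ)
    (hcop : ∀ D : MvPolynomial (Fin 2) ℝ, D ∣ p → D ∣ q → IsUnit D)
    (hdeg : max p.totalDegree q.totalDegree = d') :
    ∃ (a v : Fin 2 → ℝ), v ≠ 0 ∧
      IsCoprime
        (MvPolynomial.eval₂ Polynomial.C
          (fun i => Polynomial.C (a i) + Polynomial.C (v i) * Polynomial.X) p)
        (MvPolynomial.eval₂ Polynomial.C
          (fun i => Polynomial.C (a i) + Polynomial.C (v i) * Polynomial.X) q) ∧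
      ((MvPolynomial.eval₂ Polynomial.C
          (fun i => Polynomial.C (a i) + Polynomial.C (v i) * Polynomial.X) p).natDegree = d' ∨
       (MvPolynomial.eval₂ Polynomial.C
          (fun i => Polynomial.C (a i) + Polynomial.C (v i) * Polynomial.X) q).natDegree = d') := by
  have hconv : ∀ (f : Fin 2 → Polynomial ℝ) (u : MvPolynomial (Fin 2) ℝ),
      MvPolynomial.eval₂ Polynomial.C f u = MvPolynomial.aeval f u := by
    intro f u
    rw [MvPolynomial.aeval_def, Polynomial.algebraMap_eq]
  rcases max_choice p.totalDegree q.totalDegree with h | h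
  · obtain ⟨a, v, hv, hco, hd⟩ := main_aux d' p q hcop (h ▸ hdeg)
    exact ⟨a, v, hv, by rw [hconv, hconv]; exact hco, Or.inl (by rw [hconv]; exact hd)⟩
  · obtain ⟨a, v, hv, hco, hd⟩ := main_aux d' q p (fun D h1 h2 => hcop D h2 h1) (h ▸ hdeg)
    exact ⟨a, v, hv, by rw [hconv, hconv]; exact hco.symm, Or.inr (by rw [hconv]; exact hd)⟩
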